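/- Let L : ℝ^d → ℝ^𝒴 be a loss such that Γ(p) = argmin_{u∈ℝ^d} ⟨p, L(u)⟩ is nonempty for every p ∈ Δ_𝒴, and for u ∈ ℝ^d write Γ_u = {p ∈ Δ_𝒴 : u ∈ Γ(p)}. Then the following are equivalent: (1) there exist a finite set ℛ, an injective map φ : ℛ → ℝ^d, and a map γ from Δ_𝒴 to nonempty subsets of ℛ such that for all p ∈ Δ_𝒴 and r ∈ ℛ, r ∈ γ(p) if and only if φ(r) ∈ Γ(p); (2) there exist finitely many points u_1, …, u_m ∈ ℝ^d such that each level set Γ_{u_i} has nonempty interior relative to the affine hull of Δ_𝒴 and Γ_{u_1} ∪ ⋯ ∪ Γ_{u_m} = Δ_𝒴. -/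

import Mathlib

/-- The probability simplex over a finite outcome set `Y`. -/
def probSimplex (Y : Type*) [Fintype Y] : Set (Y → ℝ) :=
  {p | (∀ y, 0 ≤ p y) ∧ ∑ y, p y = 1}

/-- Expected loss `⟨p, v⟩ = ∑ y, p y * v y`. -/
def elloss {Y : Type*} [Fintype Y] (p : Y → ℝ) (v : Y → ℝ) : ℝ :=
  ∑ y, p y * v y

/-- `u` minimizes the expected loss `⟨p, L ·⟩` over the report set. -/
def Minimizes {U Y : Type*} [Fintype Y] (p : Y → ℝ) (L : U → Y → ℝ) (u : U) : Prop :=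
  ∀ u' : U, elloss p (L u) ≤ elloss p (L u')

/-- The Bayes risk `inf_u ⟨p, L u⟩`. -/
noncomputable def bayesRisk {U Y : Type*} [Fintype Y] (p : Y → ℝ) (L : U → Y → ℝ) : ℝ :=
  sInf (Set.range fun u => elloss p (L u))

/-- `L` embeds the discrete loss `ℓ`. -/
def Embeds {R Y : Type*} [Fintype Y] {d : ℕ}
    (L : (Fin d → ℝ) → Y → ℝ) (ℓ : R → Y → ℝ) : Prop :=
  ∃ φ : R → (Fin d → ℝ), Function.Injective φ ∧ (∀ r, L (φ r) = ℓ r) ∧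
    ∀ p ∈ probSimplex Y, ∀ r, Minimizes p ℓ r ↔ Minimizes p L (φ r)

/-- A polyhedral convex function: a pointwise maximum of finitely many affine functions. -/
def IsPolyhedralFn {d : ℕ} (g : (Fin d → ℝ) → ℝ) : Prop :=
  ∃ (m : ℕ) (a : Fin (m + 1) → Fin d → ℝ) (b : Fin (m + 1) → ℝ),
    ∀ x, g x = Finset.univ.sup' Finset.univ_nonempty (fun i => ∑ j, a i j * x j + b i)

/-- For a loss `L` whose set of minimizers `Γ(p)` is nonempty for each `p` in
the simplex, the following are equivalent: (1) there are finitely many points `φ r` (injective)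
and a nonempty-valued assignment `γ` with `r ∈ γ(p) ↔ φ r ∈ Γ(p)`; (2) there are finitely many
points `u₁, …, u_m` whose level sets `Γ_{uᵢ}` are full-dimensional (nonempty interior relative
to the affine hull of the simplex) and cover the simplex. -/
lemma aux_union_thin {X ι : Type*} [TopologicalSpace X] (P : ι → Set X) :
    ∀ s : Finset ι, (∀ r ∈ s, IsClosed (P r) ∧ interior (P r) = ∅) →
    ∀ U : Set X, IsOpen U → U.Nonempty → ¬ U ⊆ ⋃ r ∈ s, P r := by
  classical
  intro s
  induction s using Finset.induction_on with
  | empty =>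
    intro _ U _ hUne hsub
    obtain ⟨x, hx⟩ := hUne
    simpa using hsub hx
  | insert _ _ ha ih =>
    rename_i a s'
    intro hP U hUo hUne hsub
    rw [Finset.set_biUnion_insert] at hsub
    by_cases hD : (U \ P a).Nonempty
    · refine ih (fun r hr => hP r (Finset.mem_insert_of_mem hr)) (U \ P a)
        (hUo.sdiff (hP a (Finset.mem_insert_self a s')).1) hD ?_
      intro x hx
      rcases hsub hx.1 with h | h
      · exact absurd h hx.2
      · exact h
    · have hUP : U ⊆ P a := by
        intro x hx
        by_contra hxP
        exact hD ⟨x, hx, hxP⟩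
      have : U ⊆ interior (P a) := interior_maximal hUP hUo
      rw [(hP a (Finset.mem_insert_self a s')).2] at this
      obtain ⟨x, hx⟩ := hUne
      exact this hx

theorem embeds_finite_property_iff_full_dim_cover
    {Y : Type*} [Fintype Y] {d : ℕ}
    (L : (Fin d → ℝ) → Y → ℝ) (hL0 : ∀ u y, 0 ≤ L u y)
    (hatt : ∀ p ∈ probSimplex Y, ∃ u, Minimizes p L u) :
    (∃ (m : ℕ) (φ : Fin m → (Fin d → ℝ)) (γ : (Y → ℝ) → Set (Fin m)),
        Function.Injective φ ∧ (∀ p ∈ probSimplex Y, (γ p).Nonempty) ∧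
        (∀ p ∈ probSimplex Y, ∀ r : Fin m, r ∈ γ p ↔ Minimizes p L (φ r))) ↔
    (∃ (m : ℕ) (u : Fin m → (Fin d → ℝ)),
        (∀ i : Fin m, ∃ p ∈ {q ∈ probSimplex Y | Minimizes q L (u i)}, ∃ ε > 0,
          ∀ q : Y → ℝ, ∑ y, q y = 1 → dist q p < ε →
            q ∈ {q' ∈ probSimplex Y | Minimizes q' L (u i)}) ∧
        (⋃ i : Fin m, {q ∈ probSimplex Y | Minimizes q L (u i)}) = probSimplex Y) := by
  classical
  constructor
  · rintro ⟨m, φ, γ, hinj, hne, hiff⟩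
    -- level sets
    set Γ : Fin m → Set (Y → ℝ) := fun r => {q ∈ probSimplex Y | Minimizes q L (φ r)} with hΓ
    have hcover : ∀ p ∈ probSimplex Y, ∃ r, p ∈ Γ r := by
      intro p hp
      obtain ⟨r, hr⟩ := hne p hp
      exact ⟨r, hp, (hiff p hp r).mp hr⟩
    have hcont : ∀ v : Y → ℝ, Continuous fun q : Y → ℝ => elloss q v := by
      intro v
      unfold elloss
      exact continuous_finset_sum _ fun y _ => (continuous_apply y).mul continuous_const
    have hclosed : ∀ r, IsClosed (Γ r) := by
      intro r
      have h1 : IsClosed {q : Y → ℝ | ∀ y, 0 ≤ q y} := by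
        have he : {q : Y → ℝ | ∀ y, 0 ≤ q y} = ⋂ y, {q : Y → ℝ | 0 ≤ q y} := by
          ext q; simp
        rw [he]
        exact isClosed_iInter fun y => isClosed_le continuous_const (continuous_apply y)
      have h2 : IsClosed {q : Y → ℝ | ∑ y, q y = 1} :=
        isClosed_eq (continuous_finset_sum _ fun y _ => continuous_apply y) continuous_const
      have h3 : IsClosed {q : Y → ℝ | Minimizes q L (φ r)} := by
        have he : {q : Y → ℝ | Minimizes q L (φ r)} =
            ⋂ u', {q : Y → ℝ | elloss q (L (φ r)) ≤ elloss q (L u')} := by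
          ext q; simp [Minimizes]
        rw [he]
        exact isClosed_iInter fun u' => isClosed_le (hcont _) (hcont _)
      have he : Γ r = ({q : Y → ℝ | ∀ y, 0 ≤ q y} ∩ {q : Y → ℝ | ∑ y, q y = 1}) ∩
          {q : Y → ℝ | Minimizes q L (φ r)} := by
        ext q
        simp only [hΓ, Set.mem_sep_iff, Set.mem_inter_iff, Set.mem_setOf_eq, probSimplex,
          and_assoc]
      rw [he]
      exact (h1.inter h2).inter h3
    -- fatness predicate (matches the RHS condition verbatim)
    set pred : Fin m → Prop := fun r => ∃ p ∈ Γ r, ∃ ε > 0,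
      ∀ q : Y → ℝ, ∑ y, q y = 1 → dist q p < ε → q ∈ Γ r with hpred
    -- the affine hull as subtype
    set V : Set (Y → ℝ) := {q | ∑ y, q y = 1} with hV
    set P : Fin m → Set V := fun r => Subtype.val ⁻¹' Γ r with hP
    have hPclosed : ∀ r, IsClosed (P r) := fun r => (hclosed r).preimage continuous_subtype_val
    have hPint : ∀ r, ¬ pred r → interior (P r) = ∅ := by
      intro r hnp
      by_contra h
      obtain ⟨x, hx⟩ := Set.nonempty_iff_ne_empty.mpr h
      obtain ⟨ε, hε, hball⟩ := Metric.isOpen_iff.mp isOpen_interior x hx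
      refine hnp ⟨x.1, interior_subset (s := P r) hx, ε, hε, fun q hq1 hq2 => ?_⟩
      have hm : (⟨q, hq1⟩ : V) ∈ Metric.ball x ε := by
        rw [Metric.mem_ball, Subtype.dist_eq]
        exact hq2
      exact interior_subset (s := P r) (hball hm)
    set Fat : Finset (Fin m) := Finset.univ.filter pred with hFat
    -- main covering claim
    have hmain : ∀ p ∈ probSimplex Y, ∃ r ∈ Fat, Minimizes p L (φ r) := by
      intro p hp
      by_contra hnot
      push_neg at hnot
      have hCclosed : IsClosed (⋃ r ∈ Fat, Γ r) :=
        Set.Finite.isClosed_biUnion Fat.finite_toSet fun r _ => hclosed r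
      have hpC : p ∉ ⋃ r ∈ Fat, Γ r := by
        simp only [Set.mem_iUnion]
        rintro ⟨r, hr, hmem⟩
        exact hnot r hr hmem.2
      obtain ⟨ε, hε, hball⟩ := Metric.isOpen_iff.mp hCclosed.isOpen_compl p hpC
      have hYne : Nonempty Y := by
        by_contra h
        rw [not_nonempty_iff] at h
        have := hp.2
        simp [Finset.univ_eq_empty] at this
      obtain ⟨z, c, hc0, hzc, hzsum⟩ : ∃ (z : Y → ℝ) (c : ℝ), 0 < c ∧ (∀ y, z y = c) ∧
          ∑ y, z y = 1 := by
        have hn0 : (0:ℝ) < (Fintype.card Y : ℝ) := by exact_mod_cast Fintype.card_pos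
        refine ⟨fun _ => 1 / (Fintype.card Y : ℝ), 1 / (Fintype.card Y : ℝ), by positivity,
          fun _ => rfl, ?_⟩
        have he : ∑ _y : Y, (1 / (Fintype.card Y : ℝ)) =
            (Fintype.card Y : ℝ) * (1 / (Fintype.card Y : ℝ)) := by
          rw [Finset.sum_const, Finset.card_univ, nsmul_eq_mul]
        rw [he]
        field_simp
      obtain ⟨t, ht0, ht1, htd⟩ : ∃ t : ℝ, 0 < t ∧ t ≤ 1 ∧ t * dist z p ≤ ε / 2 := by
        have hdzp : (0:ℝ) ≤ dist z p := dist_nonneg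
        have h2 : (0:ℝ) < dist z p + 1 := by linarith
        refine ⟨min (ε / (2 * (dist z p + 1))) 1, lt_min (by positivity) one_pos,
          min_le_right _ _, ?_⟩
        have h1 : min (ε / (2 * (dist z p + 1))) 1 ≤ ε / (2 * (dist z p + 1)) := min_le_left _ _
        have h3 : min (ε / (2 * (dist z p + 1))) 1 * (dist z p + 1) ≤
            (ε / (2 * (dist z p + 1))) * (dist z p + 1) :=
          mul_le_mul_of_nonneg_right h1 h2.le
        have h4 : (ε / (2 * (dist z p + 1))) * (dist z p + 1) = ε / 2 := by
          field_simp
        have h5 : (0:ℝ) ≤ min (ε / (2 * (dist z p + 1))) 1 :=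
          le_min (by positivity) zero_le_one
        nlinarith [h3, h4, h5, hdzp]
      obtain ⟨pt, hptsum, hptlow, hdistpt⟩ : ∃ pt : Y → ℝ, (∑ y, pt y = 1) ∧
          (∀ y, t * c ≤ pt y) ∧ dist pt p ≤ ε / 2 := by
        refine ⟨fun y => (1 - t) * p y + t * z y, ?_, ?_, ?_⟩
        · rw [Finset.sum_add_distrib, ← Finset.mul_sum, ← Finset.mul_sum, hp.2, hzsum]
          ring
        · intro y
          have h1 : 0 ≤ (1 - t) * p y := mul_nonneg (by linarith) (hp.1 y)
          show t * c ≤ (1 - t) * p y + t * z y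
          rw [hzc y]
          linarith
        · have hle : dist (fun y => (1 - t) * p y + t * z y) p ≤ t * dist z p := by
            rw [dist_pi_le_iff (mul_nonneg ht0.le dist_nonneg)]
            intro y
            show |(1 - t) * p y + t * z y - p y| ≤ t * dist z p
            rw [show (1 - t) * p y + t * z y - p y = t * (z y - p y) by ring, abs_mul,
              abs_of_pos ht0]
            refine mul_le_mul_of_nonneg_left ?_ ht0.le
            rw [← Real.dist_eq]
            exact dist_le_pi_dist z p y
          linarith
      obtain ⟨δ, hδ0, hδε, hδc⟩ : ∃ δ : ℝ, 0 < δ ∧ δ ≤ ε / 2 ∧ δ ≤ t * c :=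
        ⟨min (ε / 2) (t * c), lt_min (by linarith) (mul_pos ht0 hc0),
          min_le_left _ _, min_le_right _ _⟩
      -- every point of the small relative ball lies in a thin level set
      have key : ∀ q : Y → ℝ, (∑ y, q y = 1) → dist q pt < δ → ∃ r, ¬ pred r ∧ q ∈ Γ r := by
        intro q hq1 hq2
        have hqsimp : q ∈ probSimplex Y := by
          refine ⟨fun y => ?_, hq1⟩
          have h1 : |q y - pt y| ≤ dist q pt := by
            rw [← Real.dist_eq]
            exact dist_le_pi_dist q pt y
          have h2 := hptlow y
          have h3 := abs_le.mp (le_of_lt (lt_of_le_of_lt h1 hq2))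
          linarith [h3.1]
        obtain ⟨r, hr⟩ := hcover q hqsimp
        refine ⟨r, ?_, hr⟩
        intro hpredr
        have hrFat : r ∈ Fat := Finset.mem_filter.mpr ⟨Finset.mem_univ r, hpredr⟩
        have hqp : dist q p < ε := by
          calc dist q p ≤ dist q pt + dist pt p := dist_triangle q pt p
            _ < δ + ε / 2 := by linarith
            _ ≤ ε := by linarith
        exact (hball hqp) (Set.mem_biUnion hrFat hr)
      -- contradiction with aux lemma
      have hptV : pt ∈ V := hptsum
      have := aux_union_thin P (Finset.univ.filter fun r => ¬ pred r)
        (fun r hr => ⟨hPclosed r, hPint r (Finset.mem_filter.mp hr).2⟩)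
        (Metric.ball (⟨pt, hptV⟩ : V) δ) Metric.isOpen_ball
        ⟨⟨pt, hptV⟩, Metric.mem_ball_self hδ0⟩
      apply this
      intro x hx
      rw [Metric.mem_ball, Subtype.dist_eq] at hx
      obtain ⟨r, hnp, hq⟩ := key x.1 x.2 hx
      exact Set.mem_biUnion (Finset.mem_filter.mpr ⟨Finset.mem_univ r, hnp⟩) hq
    -- construct the witness
    refine ⟨Fat.card, fun i => φ (Fat.equivFin.symm i : Fin m), ?_, ?_⟩
    · intro i
      exact (Finset.mem_filter.mp (Fat.equivFin.symm i).2).2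
    · ext p
      simp only [Set.mem_iUnion, Set.mem_sep_iff]
      constructor
      · rintro ⟨i, hp, _⟩
        exact hp
      · intro hp
        obtain ⟨r, hrFat, hrmin⟩ := hmain p hp
        refine ⟨Fat.equivFin ⟨r, hrFat⟩, hp, ?_⟩
        simp only [Equiv.symm_apply_apply]
        exact hrmin
  · rintro ⟨m, u, _, hcover⟩
    set T : Finset (Fin d → ℝ) := Finset.image u Finset.univ with hT
    refine ⟨T.card, fun i => (T.equivFin.symm i : Fin d → ℝ),
      fun p => {r | Minimizes p L ((T.equivFin.symm r : Fin d → ℝ))}, ?_, ?_, ?_⟩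
    · intro i j h
      exact T.equivFin.symm.injective (Subtype.ext h)
    · intro p hp
      have hp' : p ∈ ⋃ i : Fin m, {q ∈ probSimplex Y | Minimizes q L (u i)} := by
        rw [hcover]; exact hp
      obtain ⟨i, hi⟩ := Set.mem_iUnion.mp hp'
      have hmem : u i ∈ T := Finset.mem_image_of_mem u (Finset.mem_univ i)
      refine ⟨T.equivFin ⟨u i, hmem⟩, ?_⟩
      show Minimizes p L _
      simp only [Equiv.symm_apply_apply]
      exact hi.2
    · intro p _ r
      exact Iff.rfl
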